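/- Let φ : ℝ → ℝ be continuous with φ(t) > 0 for all t, let ψ > 0, a > 0, and let T : ℝ → ℝ be twice differentiable on [0,a) with T(0) = 0, T'(0) = ψ, and T''(z) = φ(T(z)) for all z ∈ [0,a). Then T' > 0 on [0,a) and for every z ∈ [0,a) it holds that ∫_0^{T(z)} (ψ² + 2·Φ(x))^{−1/2} dx = z, where Φ(x) = ∫_0^x φ(t) dt. (This gives the implicit characterization of the exponential generating function of bilabelled bucket increasing tree families with bucket size b = 2.) -/

import Mathlib

open Set intervalIntegral

lemma const_on_Ico {a : ℝ} (f : ℝ → ℝ)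
    (hf : ∀ x ∈ Set.Ico 0 a, HasDerivWithinAt f 0 (Set.Ico 0 a) x) :
    ∀ z ∈ Set.Ico 0 a, f z = f 0 := by
  intro z hz
  have hsub : Icc (0:ℝ) z ⊆ Ico 0 a := Icc_subset_Ico_right hz.2
  have hcont : ContinuousOn f (Icc 0 z) := fun x hx =>
    ((hf x (hsub hx)).continuousWithinAt).mono hsub
  have hderiv : ∀ x ∈ Ico (0:ℝ) z, HasDerivWithinAt f 0 (Ici x) x := by
    intro x hx
    have hx' : x ∈ Ico (0:ℝ) a := ⟨hx.1, hx.2.trans hz.2⟩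
    refine (hf x hx').mono_of_mem_nhdsWithin ?_
    rw [mem_nhdsWithin]
    exact ⟨Iio a, isOpen_Iio, hx'.2, fun y hy => ⟨hx.1.trans hy.2, hy.1⟩⟩
  exact constant_of_has_deriv_right_zero hcont hderiv z (right_mem_Icc.2 hz.1)

theorem implicit_characterization_b2 (φ : ℝ → ℝ) (hφ : Continuous φ) (hφpos : ∀ t, 0 < φ t)
    (ψ a : ℝ) (hψ : 0 < ψ) (ha : 0 < a)
    (T T' : ℝ → ℝ) (hT0 : T 0 = 0) (hT'0 : T' 0 = ψ)
    (hd1 : ∀ z ∈ Set.Ico 0 a, HasDerivWithinAt T (T' z) (Set.Ico 0 a) z)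
    (hd2 : ∀ z ∈ Set.Ico 0 a, HasDerivWithinAt T' (φ (T z)) (Set.Ico 0 a) z) :
    ∀ z ∈ Set.Ico 0 a, 0 < T' z ∧
      (∫ x in (0 : ℝ)..(T z), (ψ ^ 2 + 2 * ∫ t in (0 : ℝ)..x, φ t) ^ (-(1 / 2) : ℝ)) = z := by
  set Φ : ℝ → ℝ := fun x => ∫ t in (0:ℝ)..x, φ t with hΦdef
  -- derivative of Φ
  have hΦd : ∀ x, HasDerivAt Φ (φ x) x := fun x =>
    intervalIntegral.integral_hasDerivAt_right (hφ.intervalIntegrable 0 x)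
      (hφ.stronglyMeasurable.stronglyMeasurableAtFilter) hφ.continuousAt
  have hΦcont : Continuous Φ := continuous_iff_continuousAt.mpr fun x => (hΦd x).continuousAt
  have hΦ0 : Φ 0 = 0 := intervalIntegral.integral_same
  have hΦnonneg : ∀ x : ℝ, 0 ≤ x → 0 ≤ Φ x := fun x hx =>
    intervalIntegral.integral_nonneg hx (fun t _ => (hφpos t).le)
  -- T' is positive
  have hT'cont : ContinuousOn T' (Ico 0 a) := fun x hx => (hd2 x hx).continuousWithinAt
  have hmono' : StrictMonoOn T' (Ico 0 a) :=
    strictMonoOn_of_hasDerivWithinAt_pos (convex_Ico 0 a) hT'cont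
      (fun x hx => (hd2 x (interior_subset hx)).mono interior_subset)
      (fun x _ => hφpos (T x))
  have hT'pos : ∀ z ∈ Ico (0:ℝ) a, 0 < T' z := by
    intro z hz
    rcases eq_or_lt_of_le hz.1 with h | h
    · rw [← h, hT'0]; exact hψ
    · have := hmono' ⟨le_refl 0, ha⟩ hz h
      rw [hT'0] at this
      exact hψ.trans this
  -- T is nonnegative
  have hTcont : ContinuousOn T (Ico 0 a) := fun x hx => (hd1 x hx).continuousWithinAt
  have hTmono : StrictMonoOn T (Ico 0 a) :=
    strictMonoOn_of_hasDerivWithinAt_pos (convex_Ico 0 a) hTcont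
      (fun x hx => (hd1 x (interior_subset hx)).mono interior_subset)
      (fun x hx => hT'pos x (interior_subset hx))
  have hTnonneg : ∀ z ∈ Ico (0:ℝ) a, 0 ≤ T z := by
    intro z hz
    rcases eq_or_lt_of_le hz.1 with h | h
    · rw [← h, hT0]
    · have := hTmono ⟨le_refl 0, ha⟩ hz h
      rw [hT0] at this
      exact this.le
  -- energy identity
  have hE : ∀ z ∈ Ico (0:ℝ) a, HasDerivWithinAt (fun z => T' z ^ 2 - 2 * Φ (T z)) 0 (Ico 0 a) z := by
    intro z hz
    have h1 : HasDerivWithinAt (fun z => T' z ^ 2)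
        ((2:ℕ) * T' z ^ 1 * φ (T z)) (Ico 0 a) z := (hd2 z hz).pow 2
    have h2 : HasDerivWithinAt (fun z => Φ (T z)) (φ (T z) * T' z) (Ico 0 a) z :=
      (hΦd (T z)).comp_hasDerivWithinAt z (hd1 z hz)
    have := h1.sub (h2.const_mul 2)
    convert this using 1
    · rfl
    · rfl
    · rfl
    push_cast
    ring
  have hkey : ∀ z ∈ Ico (0:ℝ) a, T' z ^ 2 = ψ ^ 2 + 2 * Φ (T z) := by
    intro z hz
    have := const_on_Ico _ hE z hz
    simp only [hT0, hT'0, hΦ0] at this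
    linarith
  -- the integrand
  set g : ℝ → ℝ := fun x => (ψ ^ 2 + 2 * Φ x) ^ (-(1/2) : ℝ) with hgdef
  have hbase : ∀ x : ℝ, 0 ≤ x → 0 < ψ ^ 2 + 2 * Φ x := fun x hx => by
    have := hΦnonneg x hx
    nlinarith
  have hbcont : Continuous fun x => ψ ^ 2 + 2 * Φ x :=
    continuous_const.add (continuous_const.mul hΦcont)
  set U : Set ℝ := {x | 0 < ψ ^ 2 + 2 * Φ x} with hUdef
  have hUopen : IsOpen U := isOpen_lt continuous_const hbcont
  have hgcontAtU : ∀ x ∈ U, ContinuousAt g x := fun x hx =>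
    hbcont.continuousAt.rpow_const (Or.inl hx.ne')
  have hmemU : ∀ x : ℝ, 0 ≤ x → x ∈ U := fun x hx => hbase x hx
  have hgcontAt : ∀ x : ℝ, 0 ≤ x → ContinuousAt g x := fun x hx =>
    hgcontAtU x (hmemU x hx)
  set G : ℝ → ℝ := fun y => ∫ x in (0:ℝ)..y, g x with hGdef
  have hGd : ∀ y : ℝ, 0 ≤ y → HasDerivAt G (g y) y := by
    intro y hy
    refine intervalIntegral.integral_hasDerivAt_right ?_
      (ContinuousAt.stronglyMeasurableAtFilter hUopen hgcontAtU y (hmemU y hy)) (hgcontAt y hy)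
    refine ContinuousOn.intervalIntegrable ?_
    intro x hx
    rw [uIcc_of_le hy] at hx
    exact (hgcontAt x hx.1).continuousWithinAt
  -- H(z) = G(T z) - z is constant
  have hH : ∀ z ∈ Ico (0:ℝ) a, HasDerivWithinAt (fun z => G (T z) - z) 0 (Ico 0 a) z := by
    intro z hz
    have h1 : HasDerivWithinAt (fun z => G (T z)) (g (T z) * T' z) (Ico 0 a) z :=
      (hGd (T z) (hTnonneg z hz)).comp_hasDerivWithinAt z (hd1 z hz)
    have h2 : HasDerivWithinAt (fun z : ℝ => z) 1 (Ico 0 a) z := hasDerivWithinAt_id z _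
    have h3 := h1.sub h2
    have hgval : g (T z) = (T' z)⁻¹ := by
      have hpos := hT'pos z hz
      rw [hgdef]
      simp only
      rw [← hkey z hz, ← Real.rpow_natCast (T' z) 2, ← Real.rpow_mul hpos.le]
      norm_num
      exact Real.rpow_neg_one (T' z)
    have : g (T z) * T' z - 1 = 0 := by
      rw [hgval, inv_mul_cancel₀ (hT'pos z hz).ne']
      ring
    rwa [this] at h3
  intro z hz
  refine ⟨hT'pos z hz, ?_⟩
  have := const_on_Ico _ hH z hz
  simp only [hT0] at this
  have hG0 : G 0 = 0 := intervalIntegral.integral_same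
  rw [hG0] at this
  have : G (T z) = z := by linarith
  exact this
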